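/- If two permutations π and σ of [n] are adjacent, then the set {i ∈ [n] : π(i) ≠ σ(i)} splits into disjoint pairs {i, j} such that π(i) = σ(j) and π(j) = σ(i). -/
import Mathlib


open Finset

/-- Two permutations are adjacent if every element's position changes by at most one. -/
def Adjacent {n : ℕ} (π σ : Equiv.Perm (Fin n)) : Prop :=
  ∀ i, ((π i : ℤ) - (σ i : ℤ)).natAbs ≤ 1

/-- Number of times wires `i` and `j` swap in the sequence `T` of height `h`. -/
def SwapCount {n : ℕ} (T : ℕ → Equiv.Perm (Fin n)) (h : ℕ) (i j : Fin n) : ℕ :=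
  ((Finset.range (h - 1)).filter fun t => T t i = T (t+1) j ∧ T t j = T (t+1) i).card

/-- A tangle of height `h`: a nonempty sequence of permutations with consecutive ones adjacent. -/
def IsTangle {n : ℕ} (T : ℕ → Equiv.Perm (Fin n)) (h : ℕ) : Prop :=
  1 ≤ h ∧ ∀ t, t + 1 < h → Adjacent (T t) (T (t+1))

/-- A tangle starting at the identity realizing the list `l`. -/
def Realizes {n : ℕ} (T : ℕ → Equiv.Perm (Fin n)) (h : ℕ) (l : Fin n → Fin n → ℕ) : Prop :=
  IsTangle T h ∧ T 0 = 1 ∧ ∀ i j, i ≠ j → SwapCount T h i j = l i j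

/-- A list is feasible if some tangle starting at the identity realizes it. -/
def Feasible {n : ℕ} (l : Fin n → Fin n → ℕ) : Prop :=
  ∃ h T, Realizes T h l

/-- A list is consistent if the map `id_n L` is a permutation of `[n]`. -/
def Consistent {n : ℕ} (l : Fin n → Fin n → ℕ) : Prop :=
  ∃ ρ : Equiv.Perm (Fin n), ∀ i : Fin n,
    ((i : ℤ) + ((Finset.univ.filter fun j => i < j ∧ Odd (l i j)).card : ℤ)
      - ((Finset.univ.filter fun j => j < i ∧ Odd (l i j)).card : ℤ)) = (ρ i : ℤ)


lemma key_lemma {n : ℕ} (π σ : Equiv.Perm (Fin n))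
    (h : ∀ i, ((π i : ℤ) - (σ i : ℤ)).natAbs ≤ 1) (m : ℕ) (i : Fin n)
    (hσ : (σ i : ℕ) = m) (hπ : (π i : ℕ) = m + 1) :
    ∃ j, (σ j : ℕ) = m + 1 ∧ (π j : ℕ) = m := by
  classical
  set P := univ.filter fun k : Fin n => (π k : ℕ) ≤ m with hP
  set Q := univ.filter fun k : Fin n => (σ k : ℕ) ≤ m with hQ
  have hc : ∀ τ : Equiv.Perm (Fin n),
      (univ.filter fun k : Fin n => (τ k : ℕ) ≤ m).card
        = (univ.filter fun v : Fin n => (v : ℕ) ≤ m).card := by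
    intro τ
    apply Finset.card_bij (fun k _ => τ k)
    · intro a ha; simp only [mem_filter, mem_univ, true_and] at ha ⊢; exact ha
    · intro a _ b _ hab; exact τ.injective hab
    · intro b hb
      refine ⟨τ.symm b, ?_, by simp⟩
      simp only [mem_filter, mem_univ, true_and] at hb ⊢
      simpa using hb
  have hcard : P.card = Q.card := (hc π).trans (hc σ).symm
  have hiQ : i ∈ Q := by simp [hQ, hσ]
  have hiP : i ∉ P := by simp [hP, hπ]
  have hne : (P \ Q).Nonempty := by
    by_contra hcon
    rw [Finset.not_nonempty_iff_eq_empty, Finset.sdiff_eq_empty_iff_subset] at hcon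
    have : P = Q := Finset.eq_of_subset_of_card_le hcon (le_of_eq hcard.symm)
    exact hiP (this ▸ hiQ)
  obtain ⟨k, hk⟩ := hne
  rw [Finset.mem_sdiff, hP, hQ] at hk
  simp only [mem_filter, mem_univ, true_and, not_le] at hk
  obtain ⟨hk1, hk2⟩ := hk
  have hadj := h k
  have h1 : ((π k : ℤ) - (σ k : ℤ)).natAbs ≤ 1 := hadj
  have hπk : (π k : ℕ) = m := by omega
  have hσk : (σ k : ℕ) = m + 1 := by omega
  exact ⟨k, hσk, hπk⟩

/-- If π and σ are adjacent, the set of elements where they differ splits into pairs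
    {i, f i} with π i = σ (f i) and π (f i) = σ i. -/
theorem adjacent_splits_into_pairs (n : ℕ) (π σ : Equiv.Perm (Fin n))
    (h : Adjacent π σ) :
    ∃ f : Fin n → Fin n, ∀ i, π i ≠ σ i →
      f i ≠ i ∧ f (f i) = i ∧ π i = σ (f i) ∧ π (f i) = σ i := by
  classical
  refine ⟨fun i => σ.symm (π i), fun i hne => ?_⟩
  have hσπ : σ (σ.symm (π i)) = π i := σ.apply_symm_apply _
  have hadj := h i
  have hval : (π i : ℕ) = (σ i : ℕ) + 1 ∨ (σ i : ℕ) = (π i : ℕ) + 1 := by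
    have hne' : (π i : ℕ) ≠ (σ i : ℕ) := fun hc => hne (Fin.ext hc)
    omega
  have h' : ∀ k, ((σ k : ℤ) - (π k : ℤ)).natAbs ≤ 1 := by
    intro k; have := h k; omega
  have hkey : ∃ j, π j = σ i ∧ σ j = π i := by
    rcases hval with hv | hv
    · obtain ⟨j, hj1, hj2⟩ := key_lemma π σ h (σ i : ℕ) i rfl hv
      exact ⟨j, Fin.ext (hj2.symm ▸ rfl), Fin.ext (by rw [hj1, hv])⟩
    · obtain ⟨j, hj1, hj2⟩ := key_lemma σ π h' (π i : ℕ) i rfl hv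
      exact ⟨j, Fin.ext (by rw [hj1, hv]), Fin.ext (hj2.symm ▸ rfl)⟩
  obtain ⟨j, hj1, hj2⟩ := hkey
  have hfi : σ.symm (π i) = j := by rw [← hj2]; exact σ.symm_apply_apply j
  refine ⟨?_, ?_, ?_, ?_⟩
  · show σ.symm (π i) ≠ i
    rw [hfi]; rintro rfl; exact hne hj2.symm
  · show σ.symm (π (σ.symm (π i))) = i
    rw [hfi, hj1]; exact σ.symm_apply_apply i
  · rw [hσπ]
  · show π (σ.symm (π i)) = σ i
    rw [hfi, hj1]
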